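/- If t_II = kπ√(L1C1) for some positive integer k, then for every ε ≥ 0 and every t_I > 0 the matrix M_ε = e^{A_I ε} e^{A_II t_II} e^{A_I t_I} has spectral radius exactly 1; indeed (−1)^k is an eigenvalue of M_ε with eigenvector e1. -/

import Mathlib

open Matrix

private lemma expMulVecHasSum (B : Matrix (Fin 4) (Fin 4) ℝ) (v : Fin 4 → ℝ) :
    HasSum (fun n : ℕ => ((n.factorial : ℝ)⁻¹) • (B ^ n *ᵥ v)) (NormedSpace.exp B *ᵥ v) := by
  letI : NormedAddCommGroup (Matrix (Fin 4) (Fin 4) ℝ) := Matrix.linftyOpNormedAddCommGroup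
  letI : NormedRing (Matrix (Fin 4) (Fin 4) ℝ) := Matrix.linftyOpNormedRing
  letI : NormedAlgebra ℝ (Matrix (Fin 4) (Fin 4) ℝ) := Matrix.linftyOpNormedAlgebra
  have hs := NormedSpace.exp_series_hasSum_exp' (𝕂 := ℝ) B
  let Tl : Matrix (Fin 4) (Fin 4) ℝ →ₗ[ℝ] (Fin 4 → ℝ) :=
    { toFun := fun M => M *ᵥ v
      map_add' := fun M N => Matrix.add_mulVec M N v
      map_smul' := fun c M => Matrix.smul_mulVec c M v }
  have hT := (LinearMap.toContinuousLinearMap Tl).hasSum hs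
  simp [Tl, LinearMap.coe_toContinuousLinearMap'] at hT
  exact hT

private lemma exp_mulVec_of_kernel (B : Matrix (Fin 4) (Fin 4) ℝ) (v : Fin 4 → ℝ)
    (h : B *ᵥ v = 0) : NormedSpace.exp B *ᵥ v = v := by
  have hs := expMulVecHasSum B v
  have h2 : HasSum (fun n : ℕ => ((n.factorial : ℝ)⁻¹) • (B ^ n *ᵥ v)) v := by
    have := hasSum_single (f := fun n : ℕ => ((n.factorial : ℝ)⁻¹) • (B ^ n *ᵥ v)) 0
      (fun b hb => by
        obtain ⟨m, rfl⟩ := Nat.exists_eq_succ_of_ne_zero hb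
        simp [pow_succ, ← Matrix.mulVec_mulVec, h])
    simpa using this
  exact hs.unique h2

private lemma exp_mulVec_osc (B : Matrix (Fin 4) (Fin 4) ℝ) (v w : Fin 4 → ℝ) (θ : ℝ)
    (hθ : θ ≠ 0) (h1 : B *ᵥ v = w) (h2 : B *ᵥ w = (-(θ ^ 2)) • v) :
    NormedSpace.exp B *ᵥ v = Real.cos θ • v + (Real.sin θ / θ) • w := by
  have heven : ∀ (x y : Fin 4 → ℝ), B *ᵥ x = y → B *ᵥ y = (-(θ ^ 2)) • x →
      ∀ m : ℕ, B ^ (2 * m) *ᵥ x = ((-(θ ^ 2)) ^ m) • x := by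
    intro x y hxy hyx m
    induction m with
    | zero => simp
    | succ m ih =>
      have hrw : 2 * (m + 1) = 2 * m + 1 + 1 := by ring
      rw [hrw, pow_succ, pow_succ, ← Matrix.mulVec_mulVec, ← Matrix.mulVec_mulVec, hxy, hyx,
        Matrix.mulVec_smul, ih, smul_smul]
      congr 1
      ring
  have hw : B *ᵥ ((-(θ ^ 2)) • v) = (-(θ ^ 2)) • w := by rw [Matrix.mulVec_smul, h1]
  have hev := heven v w h1 h2
  have hod : ∀ m : ℕ, B ^ (2 * m + 1) *ᵥ v = ((-(θ ^ 2)) ^ m) • w := by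
    intro m
    rw [pow_succ, ← Matrix.mulVec_mulVec, h1, heven w ((-(θ ^ 2)) • v) h2 hw]
  have hs := expMulVecHasSum B v
  set g : ℕ → (Fin 4 → ℝ) := fun n => ((n.factorial : ℝ)⁻¹) • (B ^ n *ᵥ v) with hg
  have hcosev : HasSum (fun m : ℕ => g (2 * m)) (Real.cos θ • v) := by
    simp only [hg]
    have hc := (Real.hasSum_cos θ).smul_const v
    refine HasSum.congr_fun hc fun m => ?_
    rw [hev m, smul_smul, neg_pow, ← pow_mul]
    congr 1
    field_simp
  have hsinod : HasSum (fun m : ℕ => g (2 * m + 1)) ((Real.sin θ / θ) • w) := by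
    simp only [hg]
    have hcsum := ((Real.hasSum_sin θ).div_const θ).smul_const w
    refine HasSum.congr_fun hcsum fun m => ?_
    rw [hod m, smul_smul, neg_pow, ← pow_mul]
    congr 1
    rw [pow_succ]
    field_simp
  exact hs.unique (hcosev.even_add_odd hsinod)

private lemma expDeriv (A : Matrix (Fin 4) (Fin 4) ℝ) (x : Fin 4 → ℝ) (s : ℝ) (i : Fin 4) :
    HasDerivAt (fun r : ℝ => (NormedSpace.exp (r • A) *ᵥ x) i)
      ((A *ᵥ (NormedSpace.exp (s • A) *ᵥ x)) i) s := by
  letI : NormedAddCommGroup (Matrix (Fin 4) (Fin 4) ℝ) := Matrix.linftyOpNormedAddCommGroup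
  letI : NormedRing (Matrix (Fin 4) (Fin 4) ℝ) := Matrix.linftyOpNormedRing
  letI : NormedAlgebra ℝ (Matrix (Fin 4) (Fin 4) ℝ) := Matrix.linftyOpNormedAlgebra
  have h1 : HasDerivAt (fun r : ℝ => NormedSpace.exp (r • A))
      (A * NormedSpace.exp (s • A)) s := hasDerivAt_exp_smul_const' A s
  let Tl : Matrix (Fin 4) (Fin 4) ℝ →ₗ[ℝ] ℝ :=
    { toFun := fun M => (M *ᵥ x) i
      map_add' := fun M N => by simp [Matrix.add_mulVec]
      map_smul' := fun c M => by simp [Matrix.smul_mulVec] }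
  have h2 := ((LinearMap.toContinuousLinearMap Tl).hasFDerivAt.comp_hasDerivAt s h1)
  rw [Matrix.mulVec_mulVec]
  exact h2

private lemma energy_decay (p0 p1 p2 p3 : ℝ) (A : Matrix (Fin 4) (Fin 4) ℝ)
    (hdiss : ∀ u : Fin 4 → ℝ,
      p0 * u 0 * (A *ᵥ u) 0 + p1 * u 1 * (A *ᵥ u) 1 + p2 * u 2 * (A *ᵥ u) 2 +
        p3 * u 3 * (A *ᵥ u) 3 ≤ 0)
    (t : ℝ) (ht : 0 ≤ t) (x : Fin 4 → ℝ) :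
    p0 * ((NormedSpace.exp (t • A) *ᵥ x) 0) ^ 2 + p1 * ((NormedSpace.exp (t • A) *ᵥ x) 1) ^ 2 +
      p2 * ((NormedSpace.exp (t • A) *ᵥ x) 2) ^ 2 +
      p3 * ((NormedSpace.exp (t • A) *ᵥ x) 3) ^ 2 ≤
    p0 * (x 0) ^ 2 + p1 * (x 1) ^ 2 + p2 * (x 2) ^ 2 + p3 * (x 3) ^ 2 := by
  set u : ℝ → (Fin 4 → ℝ) := fun s => NormedSpace.exp (s • A) *ᵥ x with hu
  set f : ℝ → ℝ := fun s =>
    p0 * (u s 0) ^ 2 + p1 * (u s 1) ^ 2 + p2 * (u s 2) ^ 2 + p3 * (u s 3) ^ 2 with hf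
  have hder : ∀ s : ℝ, HasDerivAt f
      (2 * (p0 * u s 0 * (A *ᵥ u s) 0 + p1 * u s 1 * (A *ᵥ u s) 1 + p2 * u s 2 * (A *ᵥ u s) 2 +
        p3 * u s 3 * (A *ᵥ u s) 3)) s := by
    intro s
    have h0 := ((expDeriv A x s 0).pow 2).const_mul p0
    have h1 := ((expDeriv A x s 1).pow 2).const_mul p1
    have h2 := ((expDeriv A x s 2).pow 2).const_mul p2
    have h3 := ((expDeriv A x s 3).pow 2).const_mul p3
    have := ((h0.add h1).add h2).add h3
    refine this.congr_deriv ?_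
    ring
  have hanti : Antitone f := by
    refine antitone_of_deriv_nonpos (fun s => (hder s).differentiableAt) fun s => ?_
    rw [(hder s).deriv]
    nlinarith [hdiss (u s)]
  have h0 : f 0 = p0 * (x 0) ^ 2 + p1 * (x 1) ^ 2 + p2 * (x 2) ^ 2 + p3 * (x 3) ^ 2 := by
    simp [hf, hu, NormedSpace.exp_zero]
  calc f t ≤ f 0 := hanti ht
    _ = _ := h0

set_option maxHeartbeats 2000000 in
/-- if t_II = kπ√(L1C1) with k a positive integer, then M_ε has spectral
radius exactly 1 for every ε ≥ 0 and t_I > 0; indeed (-1)^k is an eigenvalue with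
eigenvector e1. -/
theorem Meps_spectral_radius_one
    (L1 L2 C1 C2 R : ℝ) (hL1 : 0 < L1) (hL2 : 0 < L2) (hC1 : 0 < C1)
    (hC2 : 0 < C2) (hR : 0 < R)
    (P : Matrix (Fin 4) (Fin 4) ℝ) (hP : P = (1/2 : ℝ) • Matrix.diagonal ![L1, L2, C1, C2])
    (AIq AIIq : Matrix (Fin 4) (Fin 4) ℝ)
    (hAIq : AIq = !![0,0,0,0; 0,0,1,1; 0,-1,0,0; 0,-1,0,-1/R])
    (hAIIq : AIIq = !![0,0,-1,0; 0,0,0,1; 1,0,0,0; 0,-1,0,-1/R])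
    (AI AII : Matrix (Fin 4) (Fin 4) ℝ)
    (hAI : AI = (1/2 : ℝ) • (P⁻¹ * AIq)) (hAII : AII = (1/2 : ℝ) • (P⁻¹ * AIIq))
    (k : ℕ) (hk : 0 < k)
    (tI tII ε : ℝ) (htI : 0 < tI) (hε : 0 ≤ ε)
    (htII : tII = k * Real.pi * Real.sqrt (L1 * C1))
    (Mε : Matrix (Fin 4) (Fin 4) ℝ)
    (hMε : Mε = NormedSpace.exp (ε • AI) * NormedSpace.exp (tII • AII) *
                NormedSpace.exp (tI • AI))
    (e1 : Fin 4 → ℝ) (he1 : e1 = ![1,0,0,0]) :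
    Mε *ᵥ e1 = ((-1 : ℝ) ^ k) • e1 ∧
    (((-1 : ℂ) ^ k) ∈ spectrum ℂ (Mε.map Complex.ofReal)) ∧
    (∀ z ∈ spectrum ℂ (Mε.map Complex.ofReal), ‖z‖ ≤ 1) := by
  have hπ := Real.pi_pos
  -- explicit forms of AI, AII
  have hPinv : P⁻¹ = Matrix.diagonal ![2/L1, 2/L2, 2/C1, 2/C2] := by
    apply Matrix.inv_eq_left_inv
    rw [hP]
    ext i j
    fin_cases i <;> fin_cases j <;>
      simp [Matrix.mul_apply, Fin.sum_univ_four, Matrix.diagonal, Matrix.one_apply,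
        Matrix.vecHead, Matrix.vecTail] <;>
      field_simp
  have hAI' : AI = !![0,0,0,0; 0,0,1/L2,1/L2; 0,-(1/C1),0,0; 0,-(1/C2),0,-(1/(R*C2))] := by
    rw [hAI, hPinv, hAIq]
    ext i j
    fin_cases i <;> fin_cases j <;>
      simp [Matrix.mul_apply, Fin.sum_univ_four, Matrix.diagonal, Matrix.vecHead,
        Matrix.vecTail] <;> field_simp
  have hAII' : AII = !![0,0,-(1/L1),0; 0,0,0,1/L2; 1/C1,0,0,0; 0,-(1/C2),0,-(1/(R*C2))] := by
    rw [hAII, hPinv, hAIIq]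
    ext i j
    fin_cases i <;> fin_cases j <;>
      simp [Matrix.mul_apply, Fin.sum_univ_four, Matrix.diagonal, Matrix.vecHead,
        Matrix.vecTail] <;> field_simp
  -- Part 1
  have hAIe1 : AI *ᵥ e1 = 0 := by
    funext i
    fin_cases i <;>
      simp [hAI', he1, Matrix.mulVec, dotProduct, Fin.sum_univ_four]
  have hexpI : ∀ s : ℝ, NormedSpace.exp (s • AI) *ᵥ e1 = e1 := fun s =>
    exp_mulVec_of_kernel _ _ (by rw [Matrix.smul_mulVec, hAIe1, smul_zero])
  have hθpos : (0 : ℝ) < (k : ℝ) * Real.pi := by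
    have : (0 : ℝ) < (k : ℝ) := by exact_mod_cast hk
    positivity
  have htII2 : tII ^ 2 = ((k : ℝ) * Real.pi) ^ 2 * (L1 * C1) := by
    rw [htII, mul_pow, Real.sq_sqrt (by positivity)]
  set w : Fin 4 → ℝ := ![0, 0, tII / C1, 0] with hwdef
  have hBv : (tII • AII) *ᵥ e1 = w := by
    funext i
    fin_cases i <;>
      simp [hAII', he1, hwdef, Matrix.mulVec, dotProduct, Fin.sum_univ_four,
        Matrix.smul_apply, div_eq_mul_inv, mul_comm]
  have hBw : (tII • AII) *ᵥ w = (-(((k : ℝ) * Real.pi) ^ 2)) • e1 := by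
    funext i
    fin_cases i <;>
      simp [hAII', he1, hwdef, Matrix.mulVec, dotProduct, Fin.sum_univ_four,
        Matrix.smul_apply]
    field_simp
    nlinarith [htII2]
  have hexpII : NormedSpace.exp (tII • AII) *ᵥ e1 = ((-1 : ℝ) ^ k) • e1 := by
    rw [exp_mulVec_osc (tII • AII) e1 w ((k : ℝ) * Real.pi) (ne_of_gt hθpos) hBv hBw]
    have hsin : Real.sin ((k : ℝ) * Real.pi) = 0 := Real.sin_nat_mul_pi k
    have hcos : Real.cos ((k : ℝ) * Real.pi) = (-1 : ℝ) ^ k := by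
      have := Real.cos_int_mul_pi_sub (0 : ℝ) (k : ℤ)
      simp at this
      simpa using this
    rw [hsin, hcos]
    simp
  have part1 : Mε *ᵥ e1 = ((-1 : ℝ) ^ k) • e1 := by
    rw [hMε, ← Matrix.mulVec_mulVec, ← Matrix.mulVec_mulVec, hexpI, hexpII,
      Matrix.mulVec_smul, hexpI]
  -- complex scaffolding
  set M' : Matrix (Fin 4) (Fin 4) ℂ := Mε.map Complex.ofReal with hM'
  set v1 : Fin 4 → ℂ := fun i => ((e1 i : ℝ) : ℂ) with hv1
  have hv' : M' *ᵥ v1 = ((-1 : ℂ) ^ k) • v1 := by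
    funext i
    have h := congrFun part1 i
    simp only [Pi.smul_apply, smul_eq_mul] at h
    simp only [hM', hv1, Matrix.mulVec, dotProduct, Matrix.map_apply, Fin.sum_univ_four,
      Pi.smul_apply, smul_eq_mul, Matrix.mulVec, dotProduct, Fin.sum_univ_four] at h ⊢
    exact_mod_cast h
  have hvne : v1 ≠ 0 := by
    intro h0
    have := congrFun h0 0
    simp [hv1, he1] at this
  have hspec : ((-1 : ℂ) ^ k) ∈ spectrum ℂ M' := by
    rw [← AlgEquiv.spectrum_eq
      (Matrix.toLinAlgEquiv' : Matrix (Fin 4) (Fin 4) ℂ ≃ₐ[ℂ] _) M',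
      ← Module.End.hasEigenvalue_iff_mem_spectrum]
    refine Module.End.hasEigenvalue_of_hasEigenvector
      ⟨Module.End.mem_eigenspace_iff.mpr ?_, hvne⟩
    rw [Matrix.toLinAlgEquiv'_apply]
    exact hv'
  refine ⟨part1, hspec, ?_⟩
  -- spectral radius bound
  -- dissipativity of AI and AII
  have hdissI : ∀ u : Fin 4 → ℝ,
      L1 * u 0 * (AI *ᵥ u) 0 + L2 * u 1 * (AI *ᵥ u) 1 + C1 * u 2 * (AI *ᵥ u) 2 +
        C2 * u 3 * (AI *ᵥ u) 3 ≤ 0 := by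
    intro u
    have hexp : L1 * u 0 * (AI *ᵥ u) 0 + L2 * u 1 * (AI *ᵥ u) 1 + C1 * u 2 * (AI *ᵥ u) 2 +
        C2 * u 3 * (AI *ᵥ u) 3 = -(u 3 ^ 2) / R := by
      simp only [hAI', Matrix.mulVec, dotProduct, Fin.sum_univ_four, Matrix.cons_val',
        Matrix.cons_val_zero, Matrix.cons_val_one, Matrix.head_cons, Matrix.empty_val',
        Matrix.cons_val_fin_one, Matrix.head_fin_const, Matrix.of_apply,
        Matrix.cons_val_two, Matrix.cons_val_three, Matrix.tail_cons, Matrix.head_cons]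
      field_simp
      ring
    rw [hexp]
    exact div_nonpos_of_nonpos_of_nonneg (by nlinarith [sq_nonneg (u 3)]) hR.le
  have hdissII : ∀ u : Fin 4 → ℝ,
      L1 * u 0 * (AII *ᵥ u) 0 + L2 * u 1 * (AII *ᵥ u) 1 + C1 * u 2 * (AII *ᵥ u) 2 +
        C2 * u 3 * (AII *ᵥ u) 3 ≤ 0 := by
    intro u
    have hexp : L1 * u 0 * (AII *ᵥ u) 0 + L2 * u 1 * (AII *ᵥ u) 1 + C1 * u 2 * (AII *ᵥ u) 2 +
        C2 * u 3 * (AII *ᵥ u) 3 = -(u 3 ^ 2) / R := by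
      simp only [hAII', Matrix.mulVec, dotProduct, Fin.sum_univ_four, Matrix.cons_val',
        Matrix.cons_val_zero, Matrix.cons_val_one, Matrix.head_cons, Matrix.empty_val',
        Matrix.cons_val_fin_one, Matrix.head_fin_const, Matrix.of_apply,
        Matrix.cons_val_two, Matrix.cons_val_three, Matrix.tail_cons, Matrix.head_cons]
      field_simp
      ring
    rw [hexp]
    exact div_nonpos_of_nonpos_of_nonneg (by nlinarith [sq_nonneg (u 3)]) hR.le
  have htIIpos : 0 ≤ tII := by
    rw [htII]
    positivity
  set E : (Fin 4 → ℝ) → ℝ :=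
    fun y => L1 * y 0 ^ 2 + L2 * y 1 ^ 2 + C1 * y 2 ^ 2 + C2 * y 3 ^ 2 with hE
  have hcontr : ∀ y : Fin 4 → ℝ, E (Mε *ᵥ y) ≤ E y := by
    intro y
    rw [hMε, ← Matrix.mulVec_mulVec, ← Matrix.mulVec_mulVec]
    have s1 := energy_decay L1 L2 C1 C2 AI hdissI tI htI.le y
    have s2 := energy_decay L1 L2 C1 C2 AII hdissII tII htIIpos
      (NormedSpace.exp (tI • AI) *ᵥ y)
    have s3 := energy_decay L1 L2 C1 C2 AI hdissI ε hε
      (NormedSpace.exp (tII • AII) *ᵥ (NormedSpace.exp (tI • AI) *ᵥ y))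
    simp only [hE]
    linarith
  intro z hz
  rw [← AlgEquiv.spectrum_eq
    (Matrix.toLinAlgEquiv' : Matrix (Fin 4) (Fin 4) ℂ ≃ₐ[ℂ] _) M',
    ← Module.End.hasEigenvalue_iff_mem_spectrum] at hz
  obtain ⟨v, hv⟩ := hz.exists_hasEigenvector
  have hvv : M' *ᵥ v = z • v := by
    have := hv.apply_eq_smul
    rwa [Matrix.toLinAlgEquiv'_apply] at this
  set a : Fin 4 → ℝ := fun i => (v i).re with ha
  set b : Fin 4 → ℝ := fun i => (v i).im with hb
  have hMa : Mε *ᵥ a = fun i => z.re * a i - z.im * b i := by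
    funext i
    have h := congrFun hvv i
    simp only [hM', hv1, Matrix.mulVec, dotProduct, Matrix.map_apply, Fin.sum_univ_four,
      Pi.smul_apply, smul_eq_mul, Complex.ext_iff, Complex.add_re, Complex.mul_re,
      Complex.ofReal_re, Complex.ofReal_im, Complex.mul_im, Complex.add_im] at h
    simp only [Matrix.mulVec, dotProduct, Fin.sum_univ_four, ha, hb]
    linarith [h.1]
  have hMb : Mε *ᵥ b = fun i => z.im * a i + z.re * b i := by
    funext i
    have h := congrFun hvv i
    simp only [hM', hv1, Matrix.mulVec, dotProduct, Matrix.map_apply, Fin.sum_univ_four,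
      Pi.smul_apply, smul_eq_mul, Complex.ext_iff, Complex.add_re, Complex.mul_re,
      Complex.ofReal_re, Complex.ofReal_im, Complex.mul_im, Complex.add_im] at h
    simp only [Matrix.mulVec, dotProduct, Fin.sum_univ_four, ha, hb]
    linarith [h.2]
  have h1 := hcontr a
  have h2 := hcontr b
  rw [hMa] at h1
  rw [hMb] at h2
  obtain ⟨i, hi⟩ : ∃ i, v i ≠ 0 := Function.ne_iff.mp hv.2
  have hsq : 0 < a i ^ 2 + b i ^ 2 := by
    rcases (by
      by_contra hcon
      push_neg at hcon
      exact hi (Complex.ext hcon.1 hcon.2) : a i ≠ 0 ∨ b i ≠ 0) with h | h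
    · nlinarith [mul_self_pos.mpr h, sq_nonneg (b i)]
    · nlinarith [mul_self_pos.mpr h, sq_nonneg (a i)]
  have hnn : 0 ≤ L1 * a 0 ^ 2 + L2 * a 1 ^ 2 + C1 * a 2 ^ 2 + C2 * a 3 ^ 2 +
      (L1 * b 0 ^ 2 + L2 * b 1 ^ 2 + C1 * b 2 ^ 2 + C2 * b 3 ^ 2) -
      (L1 * (a 0 ^ 2 + b 0 ^ 2) + L2 * (a 1 ^ 2 + b 1 ^ 2) + C1 * (a 2 ^ 2 + b 2 ^ 2) +
        C2 * (a 3 ^ 2 + b 3 ^ 2)) := by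
    have : L1 * a 0 ^ 2 + L2 * a 1 ^ 2 + C1 * a 2 ^ 2 + C2 * a 3 ^ 2 +
      (L1 * b 0 ^ 2 + L2 * b 1 ^ 2 + C1 * b 2 ^ 2 + C2 * b 3 ^ 2) -
      (L1 * (a 0 ^ 2 + b 0 ^ 2) + L2 * (a 1 ^ 2 + b 1 ^ 2) + C1 * (a 2 ^ 2 + b 2 ^ 2) +
        C2 * (a 3 ^ 2 + b 3 ^ 2)) = 0 := by ring
    linarith
  have hpos : 0 < E a + E b := by
    simp only [hE]
    fin_cases i
    · have hsq' : 0 < a 0 ^ 2 + b 0 ^ 2 := hsq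
      nlinarith [mul_pos hL1 hsq', mul_nonneg hL2.le (add_nonneg (sq_nonneg (a 1)) (sq_nonneg (b 1))),
        mul_nonneg hC1.le (add_nonneg (sq_nonneg (a 2)) (sq_nonneg (b 2))),
        mul_nonneg hC2.le (add_nonneg (sq_nonneg (a 3)) (sq_nonneg (b 3)))]
    · have hsq' : 0 < a 1 ^ 2 + b 1 ^ 2 := hsq
      nlinarith [mul_pos hL2 hsq', mul_nonneg hL1.le (add_nonneg (sq_nonneg (a 0)) (sq_nonneg (b 0))),
        mul_nonneg hC1.le (add_nonneg (sq_nonneg (a 2)) (sq_nonneg (b 2))),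
        mul_nonneg hC2.le (add_nonneg (sq_nonneg (a 3)) (sq_nonneg (b 3)))]
    · have hsq' : 0 < a 2 ^ 2 + b 2 ^ 2 := hsq
      nlinarith [mul_pos hC1 hsq', mul_nonneg hL1.le (add_nonneg (sq_nonneg (a 0)) (sq_nonneg (b 0))),
        mul_nonneg hL2.le (add_nonneg (sq_nonneg (a 1)) (sq_nonneg (b 1))),
        mul_nonneg hC2.le (add_nonneg (sq_nonneg (a 3)) (sq_nonneg (b 3)))]
    · have hsq' : 0 < a 3 ^ 2 + b 3 ^ 2 := hsq
      nlinarith [mul_pos hC2 hsq', mul_nonneg hL1.le (add_nonneg (sq_nonneg (a 0)) (sq_nonneg (b 0))),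
        mul_nonneg hL2.le (add_nonneg (sq_nonneg (a 1)) (sq_nonneg (b 1))),
        mul_nonneg hC1.le (add_nonneg (sq_nonneg (a 2)) (sq_nonneg (b 2)))]
  have hkey : (z.re ^ 2 + z.im ^ 2) * (E a + E b) ≤ E a + E b := by
    have hrw : (z.re ^ 2 + z.im ^ 2) * (E a + E b) =
        E (fun i => z.re * a i - z.im * b i) + E (fun i => z.im * a i + z.re * b i) := by
      simp only [hE]
      ring
    rw [hrw]
    simp only [hE] at h1 h2 ⊢
    linarith
  have hle : z.re ^ 2 + z.im ^ 2 ≤ 1 := by nlinarith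
  have habs : ‖z‖ ^ 2 = z.re ^ 2 + z.im ^ 2 := by
    rw [Complex.sq_norm, Complex.normSq_apply]
    ring
  nlinarith [norm_nonneg z, habs]
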